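/- For every integer ℓ ≥ 0 and every real x > 1, the Chebyshev polynomial of the first kind satisfies T_ℓ(x) ≥ (1/2)·exp(2ℓ·√((x−1)/(x+1))). -/

import Mathlib

open Polynomial Real

lemma sinh_le_mul_cosh {s : ℝ} (hs : 0 ≤ s) : Real.sinh s ≤ s * Real.cosh s := by
  have hmono : MonotoneOn (fun y : ℝ => y * Real.cosh y - Real.sinh y) (Set.Ici 0) := by
    apply monotoneOn_of_deriv_nonneg (convex_Ici 0)
    · exact (continuous_id.mul Real.continuous_cosh).sub Real.continuous_sinh |>.continuousOn
    · intro u hu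
      exact ((((hasDerivAt_id' u)).mul (Real.hasDerivAt_cosh u)).sub
        (Real.hasDerivAt_sinh u)).differentiableAt.differentiableWithinAt
    · intro u hu
      rw [interior_Ici] at hu
      have hder : HasDerivAt (fun y : ℝ => y * Real.cosh y - Real.sinh y)
          (u * Real.sinh u) u := by
        have h := ((hasDerivAt_id' u).mul (Real.hasDerivAt_cosh u)).sub
          (Real.hasDerivAt_sinh u)
        exact h.congr_deriv (by ring)
      rw [hder.deriv]
      exact mul_nonneg hu.le (Real.sinh_nonneg_iff.2 hu.le)
  have := hmono (Set.self_mem_Ici) (Set.mem_Ici.2 hs) hs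
  simp at this
  linarith

lemma T_real_cosh (t : ℝ) (n : ℤ) :
    (Polynomial.Chebyshev.T ℝ n).eval (Real.cosh t) = Real.cosh (n * t) := by
  have h := Polynomial.Chebyshev.T_complex_cos (t * Complex.I) n
  rw [Complex.cos_mul_I, show (n : ℂ) * (t * Complex.I) = (n * t : ℝ) * Complex.I by push_cast; ring,
    Complex.cos_mul_I] at h
  exact_mod_cast h

theorem chebyshev_lower_bound (ℓ : ℕ) (x : ℝ) (hx : 1 < x) :
    (1 / 2) * Real.exp (2 * ℓ * Real.sqrt ((x - 1) / (x + 1))) ≤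
      (Polynomial.Chebyshev.T ℝ ℓ).eval x := by
  set s := Real.sqrt (x ^ 2 - 1) with hs
  have hx2 : (0:ℝ) ≤ x ^ 2 - 1 := by nlinarith
  have hs2 : s ^ 2 = x ^ 2 - 1 := Real.sq_sqrt hx2
  have hspos : 0 ≤ s := Real.sqrt_nonneg _
  have hxs : 1 < x + s := by linarith
  set t := Real.log (x + s) with ht
  have htpos : 0 < t := Real.log_pos hxs
  have hexp : Real.exp t = x + s := Real.exp_log (by linarith)
  have hexpneg : Real.exp (-t) = x - s := by
    rw [Real.exp_neg, hexp]
    rw [inv_eq_iff_eq_inv, eq_comm, inv_eq_iff_eq_inv]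
    · field_simp
      nlinarith
  have hcosh : Real.cosh t = x := by
    rw [Real.cosh_eq, hexp, hexpneg]; ring
  -- half-angle facts
  have hc2 : x + 1 = 2 * Real.cosh (t/2) ^ 2 := by
    have := Real.cosh_two_mul (t/2)
    have hsq := Real.cosh_sq (t/2)
    rw [show 2 * (t/2) = t by ring, hcosh] at this
    nlinarith
  have hs2' : x - 1 = 2 * Real.sinh (t/2) ^ 2 := by
    have := Real.cosh_two_mul (t/2)
    have hsq := Real.cosh_sq (t/2)
    rw [show 2 * (t/2) = t by ring, hcosh] at this
    nlinarith
  have hcpos : 0 < Real.cosh (t/2) := Real.cosh_pos _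
  have hshnn : 0 ≤ Real.sinh (t/2) := Real.sinh_nonneg_iff.2 (by linarith)
  have hsqrt : Real.sqrt ((x - 1) / (x + 1)) = Real.sinh (t/2) / Real.cosh (t/2) := by
    rw [hs2', hc2]
    rw [show 2 * Real.sinh (t/2) ^ 2 / (2 * Real.cosh (t/2) ^ 2)
        = (Real.sinh (t/2) / Real.cosh (t/2)) ^ 2 by field_simp]
    exact Real.sqrt_sq (div_nonneg hshnn hcpos.le)
  have hkey : 2 * Real.sqrt ((x - 1) / (x + 1)) ≤ t := by
    rw [hsqrt]
    have := sinh_le_mul_cosh (s := t/2) (by linarith)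
    have h3 : Real.sinh (t/2) / Real.cosh (t/2) ≤ t/2 := by
      rw [div_le_iff₀ hcpos]; nlinarith
    linarith
  have hkey2 : 2 * (ℓ:ℝ) * Real.sqrt ((x - 1) / (x + 1)) ≤ ℓ * t := by
    have hℓ : (0:ℝ) ≤ ℓ := Nat.cast_nonneg _
    calc 2 * (ℓ:ℝ) * Real.sqrt ((x - 1) / (x + 1))
        = (ℓ:ℝ) * (2 * Real.sqrt ((x - 1) / (x + 1))) := by ring
      _ ≤ (ℓ:ℝ) * t := by exact mul_le_mul_of_nonneg_left hkey hℓ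
  have hT : (Polynomial.Chebyshev.T ℝ ℓ).eval x = Real.cosh (ℓ * t) := by
    rw [← hcosh, T_real_cosh]; norm_num
  rw [hT, Real.cosh_eq]
  have h1 : Real.exp (2 * ℓ * Real.sqrt ((x - 1) / (x + 1))) ≤ Real.exp (ℓ * t) :=
    Real.exp_le_exp.2 hkey2
  have h2 : 0 < Real.exp (-(ℓ * t)) := Real.exp_pos _
  linarith
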